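/- Carlitz's two formulas for q-Stirling numbers of the second kind agree: for 1 ≤ k ≤ N, (1−q)^{−(N−k)} ∑_{j=0}^{N−k} (−1)^j C(N, k+j) qbinom(k+j, j) equals S₂[N,k], where S₂ is defined by the recurrence S₂[n,k] = S₂[n−1,k−1] + [k]_q S₂[n−1,k] with boundary values S₂[n,1] = S₂[n,n] = 1. -/

import Mathlib

/-- Carlitz's q-Stirling numbers of the second kind, defined by the recurrence
`S₂[n+1,k+1] = S₂[n,k] + [k+1]_q S₂[n,k+1]`, in the field of rational functions in `q`.
This definition yields the boundary values `S₂[n,1] = S₂[n,n] = 1`. -/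
noncomputable def qStirling2 : ℕ → ℕ → RatFunc ℚ
  | 0, 0 => 1
  | 0, _ + 1 => 0
  | _ + 1, 0 => 0
  | n + 1, k + 1 => qStirling2 n k +
      (∑ i ∈ Finset.range (k + 1), (RatFunc.X : RatFunc ℚ) ^ i) * qStirling2 n (k + 1)

/-- The Gaussian q-binomial coefficient, via the q-Pascal recurrence. -/
noncomputable def qbinom : ℕ → ℕ → RatFunc ℚ
  | _, 0 => 1
  | 0, _ + 1 => 0
  | n + 1, k + 1 => qbinom n k + RatFunc.X ^ (k + 1) * qbinom n (k + 1)

lemma qbinom_succ_succ (n k : ℕ) :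
    qbinom (n+1) (k+1) = qbinom n k + RatFunc.X ^ (k+1) * qbinom n (k+1) := by
  simp [qbinom]

lemma qbinom_zero (n : ℕ) : qbinom n 0 = 1 := by cases n <;> simp [qbinom]

lemma qbinom_gt : ∀ n k, n < k → qbinom n k = 0
  | 0, k+1, _ => by simp [qbinom]
  | n+1, k+1, h => by
    rw [qbinom_succ_succ, qbinom_gt n k (by omega), qbinom_gt n (k+1) (by omega)]
    ring

lemma qbinom_diag : ∀ n, qbinom n n = 1
  | 0 => by simp [qbinom]
  | n+1 => by
    rw [qbinom_succ_succ, qbinom_diag n, qbinom_gt n (n+1) (by omega)]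
    ring

lemma qbinom_one_rec : ∀ a, 1 + RatFunc.X * qbinom a 1 = RatFunc.X ^ a + qbinom a 1
  | 0 => by simp [qbinom]
  | a+1 => by
    have h := qbinom_one_rec a
    rw [qbinom_succ_succ a 0, qbinom_zero]
    linear_combination RatFunc.X * h

lemma qbinom_dual (a : ℕ) : ∀ k, qbinom (k+a+1) (k+1)
    = RatFunc.X ^ a * qbinom (k+a) k + qbinom (k+a) (k+1) := by
  induction a with
  | zero =>
    intro k
    simp only [Nat.add_zero, pow_zero, one_mul]
    rw [qbinom_diag (k+1), qbinom_diag k, qbinom_gt k (k+1) (by omega)]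
    ring
  | succ a iha =>
    intro k
    induction k with
    | zero =>
      rw [show (0:ℕ)+(a+1)+1 = a+2 by omega, show (0:ℕ)+(a+1) = a+1 by omega,
        show (0:ℕ)+1 = 1 by omega]
      rw [qbinom_succ_succ (a+1) 0, qbinom_zero]
      linear_combination qbinom_one_rec (a+1)
    | succ k ihk =>
      rw [show k+1+(a+1)+1 = k+a+3 by omega, show k+1+(a+1) = k+a+2 by omega,
        show k+1+1 = k+2 by omega]
      have e1 : qbinom (k+a+3) (k+2)
          = qbinom (k+a+2) (k+1) + RatFunc.X^(k+2) * qbinom (k+a+2) (k+2) :=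
        qbinom_succ_succ (k+a+2) (k+1)
      have e2 : qbinom (k+a+2) (k+1)
          = qbinom (k+a+1) k + RatFunc.X^(k+1) * qbinom (k+a+1) (k+1) :=
        qbinom_succ_succ (k+a+1) k
      have e3 : qbinom (k+a+2) (k+2)
          = qbinom (k+a+1) (k+1) + RatFunc.X^(k+2) * qbinom (k+a+1) (k+2) :=
        qbinom_succ_succ (k+a+1) (k+1)
      have d1 : qbinom (k+a+2) (k+1)
          = RatFunc.X ^ (a+1) * qbinom (k+a+1) k + qbinom (k+a+1) (k+1) := ihk
      have d2 : qbinom (k+a+2) (k+2)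
          = RatFunc.X ^ a * qbinom (k+a+1) (k+1) + qbinom (k+a+1) (k+2) := by
        have := iha (k+1)
        rwa [show k+1+a+1 = k+a+2 by omega, show k+1+a = k+a+1 by omega] at this
      linear_combination e1 + d1 + RatFunc.X^(k+2)*d2 - RatFunc.X^(a+1)*e2 - e3

lemma qbinom_abs (k i : ℕ) :
    (1 - RatFunc.X^(i+1)) * qbinom (k+i+1) (i+1)
      = (1 - RatFunc.X^(k+1)) * qbinom (k+i+1) i := by
  have e : qbinom (k+i+2) (i+1)
      = qbinom (k+i+1) i + RatFunc.X^(i+1) * qbinom (k+i+1) (i+1) :=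
    qbinom_succ_succ (k+i+1) i
  have d : qbinom (k+i+2) (i+1)
      = RatFunc.X^(k+1) * qbinom (k+i+1) i + qbinom (k+i+1) (i+1) := by
    have := qbinom_dual (k+1) i
    rwa [show i+(k+1)+1 = k+i+2 by omega, show i+(k+1) = k+i+1 by omega] at this
  linear_combination e - d

lemma qs_succ_succ (n k : ℕ) :
    qStirling2 (n+1) (k+1) = qStirling2 n k +
      (∑ i ∈ Finset.range (k + 1), (RatFunc.X : RatFunc ℚ) ^ i) * qStirling2 n (k+1) := by
  simp [qStirling2]

lemma qs_zero (n : ℕ) : qStirling2 (n+1) 0 = 0 := by simp [qStirling2]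

lemma qs_gt : ∀ n k, n < k → qStirling2 n k = 0
  | 0, k+1, _ => by simp [qStirling2]
  | n+1, k+1, h => by
    rw [qs_succ_succ, qs_gt n k (by omega), qs_gt n (k+1) (by omega)]
    ring

lemma qs_diag : ∀ n, qStirling2 n n = 1
  | 0 => by simp [qStirling2]
  | n+1 => by
    rw [qs_succ_succ, qs_diag n, qs_gt n (n+1) (by omega)]
    ring

noncomputable def A (k m : ℕ) : RatFunc ℚ :=
  ∑ j ∈ Finset.range (m + 1),
    (-1 : RatFunc ℚ) ^ j * (((k+m).choose (k + j)) : RatFunc ℚ) * qbinom (k + j) j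

noncomputable def FA (k m j : ℕ) : RatFunc ℚ :=
  (-1:RatFunc ℚ)^j * (((k+m+2).choose (k+1+j)) : RatFunc ℚ) * qbinom (k+1+j) j
noncomputable def GA (k m j : ℕ) : RatFunc ℚ :=
  (-1:RatFunc ℚ)^j * RatFunc.X^j * (((k+m+1).choose (k+j)) : RatFunc ℚ) * qbinom (k+j) j
noncomputable def HA (k m j : ℕ) : RatFunc ℚ :=
  (-1:RatFunc ℚ)^j * (((k+m+1).choose (k+j)) : RatFunc ℚ) * qbinom (k+j) j
noncomputable def gA (k m i : ℕ) : RatFunc ℚ :=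
  (-1:RatFunc ℚ)^i * (((k+m+1).choose (k+1+i)) : RatFunc ℚ) * qbinom (k+1+i) i

lemma hA (k m : ℕ) : A (k+1) (m+1) = ∑ j ∈ Finset.range (m+2), FA k m j := by
  unfold A FA
  rw [show m+1+1 = m+2 by omega]
  simp only [show k+1+(m+1) = k+m+2 from by omega]

lemma stepA (k m : ℕ) :
    A (k+1) (m+1) = ∑ j ∈ Finset.range (m+2), GA k m j := by
  have hpt : ∀ i ∈ Finset.range (m+1),
      FA k m (i+1) - GA k m (i+1) = gA k m (i+1) - gA k m i := by
    intro i _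
    unfold FA GA gA
    simp only [show k+1+(i+1) = k+i+2 from by omega, show k+(i+1) = k+i+1 from by omega,
      show k+1+i = k+i+1 from by omega]
    have hpn : (k+m+2).choose (k+i+2)
        = (k+m+1).choose (k+i+1) + (k+m+1).choose (k+i+2) := by
      rw [show k+m+2 = (k+m+1)+1 by omega, show k+i+2 = (k+i+1)+1 by omega,
        Nat.choose_succ_succ, show (k+i+1)+1 = k+i+2 by omega]
    have hq : qbinom (k+i+2) (i+1)
        = qbinom (k+i+1) i + RatFunc.X^(i+1) * qbinom (k+i+1) (i+1) := by
      rw [show k+i+2 = (k+i+1)+1 by omega]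
      exact qbinom_succ_succ (k+i+1) i
    rw [hpn, hq]
    push_cast
    ring
  have h1 : ∑ j ∈ Finset.range (m+2), (FA k m j - GA k m j)
      = ∑ i ∈ Finset.range (m+1), (gA k m (i+1) - gA k m i) + (FA k m 0 - GA k m 0) := by
    rw [Finset.sum_range_succ' (fun j => FA k m j - GA k m j) (m+1)]
    congr 1
    exact Finset.sum_congr rfl hpt
  have hz : gA k m (m+1) = 0 := by
    unfold gA
    rw [Nat.choose_eq_zero_of_lt (by omega)]
    simp
  have h0 : FA k m 0 - GA k m 0 = gA k m 0 := by
    unfold FA GA gA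
    simp only [Nat.add_zero, show k+1+0 = k+1 from by omega]
    have hpn : (k+m+2).choose (k+1) = (k+m+1).choose k + (k+m+1).choose (k+1) := by
      rw [show k+m+2 = (k+m+1)+1 by omega]
      exact Nat.choose_succ_succ _ _
    rw [hpn, qbinom_zero, qbinom_zero]
    push_cast
    ring
  have h2 : ∑ j ∈ Finset.range (m+2), (FA k m j - GA k m j) = 0 := by
    rw [h1, Finset.sum_range_sub (gA k m), hz, h0]
    ring
  rw [Finset.sum_sub_distrib] at h2
  rw [hA k m]
  linear_combination h2

lemma hAk (k m : ℕ) : A k (m+1) = ∑ j ∈ Finset.range (m+2), HA k m j := by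
  unfold A HA
  rw [show m+1+1 = m+2 by omega]
  simp only [show k+(m+1) = k+m+1 from by omega]

noncomputable def tA (k m i : ℕ) : RatFunc ℚ :=
  (-1:RatFunc ℚ)^i * (((k+1+m).choose (k+1+i)) : RatFunc ℚ) * qbinom (k+1+i) i

lemma hAt (k m : ℕ) : A (k+1) m = ∑ i ∈ Finset.range (m+1), tA k m i := rfl

lemma stepB (k m : ℕ) :
    ∑ j ∈ Finset.range (m+2), GA k m j
      = A k (m+1) + (1 - RatFunc.X^(k+1)) * A (k+1) m := by
  have hpt : ∀ i ∈ Finset.range (m+1),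
      GA k m (i+1) - HA k m (i+1) = (1 - RatFunc.X^(k+1)) * tA k m i := by
    intro i _
    unfold GA HA tA
    simp only [show k+(i+1) = k+i+1 from by omega, show k+1+i = k+i+1 from by omega,
      show k+1+m = k+m+1 from by omega]
    have habs := qbinom_abs k i
    linear_combination ((-1:RatFunc ℚ)^i * (((k+m+1).choose (k+i+1)) : RatFunc ℚ)) * habs
  have h0 : GA k m 0 - HA k m 0 = 0 := by
    unfold GA HA
    simp
  have h2 : ∑ j ∈ Finset.range (m+2), (GA k m j - HA k m j)
      = (1 - RatFunc.X^(k+1)) * A (k+1) m := by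
    rw [Finset.sum_range_succ' (fun j => GA k m j - HA k m j) (m+1)]
    rw [Finset.sum_congr rfl hpt, ← Finset.mul_sum, ← hAt, h0]
    ring
  rw [Finset.sum_sub_distrib] at h2
  rw [hAk k m]
  linear_combination h2

lemma core (k m : ℕ) :
    A (k+1) (m+1) = A k (m+1) + (1 - RatFunc.X^(k+1)) * A (k+1) m :=
  (stepA k m).trans (stepB k m)

lemma aux (k : ℕ) : ∀ m, A k m = (1 - RatFunc.X)^m * qStirling2 (k+m) k := by
  induction k with
  | zero =>
    intro m
    cases m with
    | zero => simp [A, qbinom, qStirling2]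
    | succ m =>
      have hL : A 0 (m+1) = ((∑ j ∈ Finset.range (m+2),
          (-1:ℤ)^j * ((m+1).choose j : ℤ) : ℤ) : RatFunc ℚ) := by
        unfold A
        push_cast
        rw [show m+1+1 = m+2 by omega]
        apply Finset.sum_congr rfl
        intro j _
        simp only [Nat.zero_add]
        rw [qbinom_diag]
        ring
      rw [hL, Int.alternating_sum_range_choose]
      simp only [Nat.zero_add, Nat.add_eq, if_neg (Nat.succ_ne_zero m)]
      rw [qs_zero]
      simp
  | succ k ihk =>
    intro m
    induction m with
    | zero =>
      unfold A
      rw [Finset.sum_range_one]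
      simp only [Nat.add_zero, pow_zero, one_mul]
      rw [qbinom_zero, qs_diag, Nat.choose_self]
      simp
    | succ m ihm =>
      rw [core k m, ihk (m+1), ihm]
      have hq : qStirling2 (k+1+(m+1)) (k+1)
          = qStirling2 (k+m+1) k +
            (∑ i ∈ Finset.range (k + 1), (RatFunc.X : RatFunc ℚ) ^ i)
              * qStirling2 (k+m+1) (k+1) := by
        rw [show k+1+(m+1) = (k+m+1)+1 by omega]
        exact qs_succ_succ (k+m+1) k
      rw [hq]
      rw [show k+(m+1) = k+m+1 by omega, show k+1+m = k+m+1 by omega]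
      have hg : (1 - RatFunc.X) * ∑ i ∈ Finset.range (k+1), (RatFunc.X : RatFunc ℚ)^i
          = 1 - RatFunc.X^(k+1) := by
        linear_combination -(geom_sum_mul (RatFunc.X : RatFunc ℚ) (k+1))
      linear_combination (-((1-RatFunc.X)^m * qStirling2 (k+m+1) (k+1))) * hg

theorem stmt2 (N k : ℕ) (hk : 1 ≤ k) (h : k ≤ N) :
    ((1 - RatFunc.X : RatFunc ℚ) ^ (N - k))⁻¹ *
        ∑ j ∈ Finset.range (N - k + 1),
          (-1 : RatFunc ℚ) ^ j * (N.choose (k + j) : RatFunc ℚ) * qbinom (k + j) j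
      = qStirling2 N k := by
  obtain ⟨m, rfl⟩ : ∃ m, N = k + m := ⟨N - k, by omega⟩
  rw [show k + m - k = m by omega]
  have hX : (RatFunc.X : RatFunc ℚ) ≠ 1 := by
    intro hxx
    have h2 : (Polynomial.X : Polynomial ℚ) = 1 := by
      apply RatFunc.algebraMap_injective ℚ
      rw [RatFunc.algebraMap_X, map_one]
      exact hxx
    have := congrArg (Polynomial.eval 0) h2
    simp at this
  have hne : ((1 : RatFunc ℚ) - RatFunc.X) ≠ 0 := sub_ne_zero_of_ne (Ne.symm hX)
  have hA' : (∑ j ∈ Finset.range (m + 1),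
      (-1 : RatFunc ℚ) ^ j * ((k+m).choose (k + j) : RatFunc ℚ) * qbinom (k + j) j)
      = (1 - RatFunc.X)^m * qStirling2 (k+m) k := aux k m
  rw [hA', inv_mul_cancel_left₀ (pow_ne_zero _ hne)]
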